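/- arXiv:2605.08003 — 2 statements merged into one kernel-verified Lean document; each statement's English description precedes it below -/
import Mathlib

section
/- Let E be a real inner product space and let p, q ∈ E be unit vectors with Ω = arccos⟨p,q⟩ ∈ (0,π). For every t ∈ [0,1], arccos⟨p, Slerp(p,q,t)⟩ + arccos⟨Slerp(p,q,t), q⟩ = Ω; i.e., the interpolant lies on the minimal geodesic from p to q, splitting the total geodesic distance additively. -/
open Real

open scoped RealInnerProductSpace

/-- Spherical linear interpolation between `p` and `q` at parameter `t`. -/
noncomputable def slerp {E : Type*} [NormedAddCommGroup E] [InnerProductSpace ℝ E]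
    (p q : E) (t : ℝ) : E :=
  (Real.sin ((1 - t) * Real.arccos ⟪p, q⟫) / Real.sin (Real.arccos ⟪p, q⟫)) • p +
    (Real.sin (t * Real.arccos ⟪p, q⟫) / Real.sin (Real.arccos ⟪p, q⟫)) • q

/-- The SLERP interpolant lies on the minimal geodesic from `p` to `q`,
splitting the total geodesic distance additively. -/
theorem slerp_geodesic_additive
    {E : Type*} [NormedAddCommGroup E] [InnerProductSpace ℝ E]
    (p q : E) (hp : ‖p‖ = 1) (hq : ‖q‖ = 1)
    (hΩ : Real.arccos ⟪p, q⟫ ∈ Set.Ioo 0 Real.pi) :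
    ∀ t ∈ Set.Icc (0 : ℝ) 1,
      Real.arccos ⟪p, slerp p q t⟫ + Real.arccos ⟪slerp p q t, q⟫ =
        Real.arccos ⟪p, q⟫ := by
  intro t ht
  set Ω := Real.arccos ⟪p, q⟫ with hΩdef
  obtain ⟨hΩ0, hΩπ⟩ := hΩ
  have hsin : Real.sin Ω > 0 := Real.sin_pos_of_pos_of_lt_pi hΩ0 hΩπ
  have h1 : |⟪p, q⟫| ≤ 1 := by
    calc |⟪p, q⟫| ≤ ‖p‖ * ‖q‖ := abs_real_inner_le_norm p q
    _ = 1 := by rw [hp, hq]; ring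
  have hpq : ⟪p, q⟫ = Real.cos Ω := by
    rw [hΩdef, Real.cos_arccos (abs_le.1 h1).1 (abs_le.1 h1).2]
  have hpp : ⟪p, p⟫ = 1 := by
    rw [real_inner_self_eq_norm_sq, hp]; norm_num
  have hqq : ⟪q, q⟫ = 1 := by
    rw [real_inner_self_eq_norm_sq, hq]; norm_num
  have hqp : ⟪q, p⟫ = Real.cos Ω := by rw [real_inner_comm, hpq]
  have hip : ⟪p, slerp p q t⟫ = Real.cos (t * Ω) := by
    simp only [slerp, inner_add_right, real_inner_smul_right, ← hΩdef, hpp]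
    rw [hpq]
    have : (1 - t) * Ω = Ω - t * Ω := by ring
    rw [this, Real.sin_sub]
    field_simp
    ring
  have hiq : ⟪slerp p q t, q⟫ = Real.cos ((1 - t) * Ω) := by
    simp only [slerp, inner_add_left, real_inner_smul_left, ← hΩdef, hqq]
    rw [hpq]
    have : t * Ω = Ω - (1 - t) * Ω := by ring
    rw [this, Real.sin_sub]
    field_simp
    ring
  have ht0 : 0 ≤ t * Ω := mul_nonneg ht.1 hΩ0.le
  have ht1 : t * Ω ≤ π := le_trans (by nlinarith [ht.2, hΩ0.le]) hΩπ.le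
  have hs0 : 0 ≤ (1 - t) * Ω := mul_nonneg (by linarith [ht.2]) hΩ0.le
  have hs1 : (1 - t) * Ω ≤ π := le_trans (by nlinarith [ht.1, hΩ0.le]) hΩπ.le
  rw [hip, hiq, Real.arccos_cos ht0 ht1, Real.arccos_cos hs0 hs1]
  ring
end

section
/- Let E be a real inner product space, let μ₀, μ₁ ∈ E be unit vectors with α = arccos⟨μ₀,μ₁⟩ ∈ (0,π), and let μ = Slerp(μ₀,μ₁,t₀) for some t₀ ∈ (0,1). Then the spherical logarithmic maps of the two endpoints at μ are anti-parallel: ‖Log_μ(μ₀)‖ = t₀α, ‖Log_μ(μ₁)‖ = (1−t₀)α, and Log_μ(μ₀)/‖Log_μ(μ₀)‖ = − Log_μ(μ₁)/‖Log_μ(μ₁)‖. -/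
open Real

open scoped RealInnerProductSpace

/-- The spherical logarithmic map at base point `μ`. -/
noncomputable def sphLog {E : Type*} [NormedAddCommGroup E] [InnerProductSpace ℝ E]
    (μ x : E) : E :=
  (Real.arccos ⟪μ, x⟫ / Real.sin (Real.arccos ⟪μ, x⟫)) •
    (x - Real.cos (Real.arccos ⟪μ, x⟫) • μ)

set_option maxHeartbeats 1000000 in
/-- At an interior point `μ = Slerp(μ₀,μ₁,t₀)` of the minimal geodesic, the
logarithmic maps of the two endpoints are anti-parallel, with norms `t₀ α`
and `(1 − t₀) α` respectively. -/
theorem sphLog_antiparallel_at_slerp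
    {E : Type*} [NormedAddCommGroup E] [InnerProductSpace ℝ E]
    (μ₀ μ₁ : E) (h₀ : ‖μ₀‖ = 1) (h₁ : ‖μ₁‖ = 1)
    (hα : Real.arccos ⟪μ₀, μ₁⟫ ∈ Set.Ioo 0 Real.pi)
    (t₀ : ℝ) (ht₀ : t₀ ∈ Set.Ioo (0 : ℝ) 1) :
    ‖sphLog (slerp μ₀ μ₁ t₀) μ₀‖ = t₀ * Real.arccos ⟪μ₀, μ₁⟫ ∧
      ‖sphLog (slerp μ₀ μ₁ t₀) μ₁‖ = (1 - t₀) * Real.arccos ⟪μ₀, μ₁⟫ ∧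
      ‖sphLog (slerp μ₀ μ₁ t₀) μ₀‖⁻¹ • sphLog (slerp μ₀ μ₁ t₀) μ₀ =
        -(‖sphLog (slerp μ₀ μ₁ t₀) μ₁‖⁻¹ • sphLog (slerp μ₀ μ₁ t₀) μ₁) := by
  obtain ⟨hα0, hαπ⟩ := hα
  obtain ⟨ht0, ht1⟩ := ht₀
  have hc1 : (-1 : ℝ) ≤ ⟪μ₀, μ₁⟫ := by
    have := abs_real_inner_le_norm μ₀ μ₁
    rw [h₀, h₁] at this
    cases' abs_le.mp (by simpa using this) with h h'
    exact h
  have hc2 : ⟪μ₀, μ₁⟫ ≤ 1 := by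
    have := abs_real_inner_le_norm μ₀ μ₁
    rw [h₀, h₁] at this
    exact (abs_le.mp (by simpa using this)).2
  set α := Real.arccos ⟪μ₀, μ₁⟫ with hαdef
  have hc : Real.cos α = ⟪μ₀, μ₁⟫ := Real.cos_arccos hc1 hc2
  have hs : 0 < Real.sin α := Real.sin_pos_of_pos_of_lt_pi hα0 hαπ
  set a := t₀ * α with hadef
  set b := (1 - t₀) * α with hbdef
  have hab : a + b = α := by rw [hadef, hbdef]; ring
  have ha0 : 0 < a := mul_pos ht0 hα0
  have hb0 : 0 < b := mul_pos (by linarith) hα0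
  have haπ : a < Real.pi := by nlinarith
  have hbπ : b < Real.pi := by nlinarith
  have hsa : 0 < Real.sin a := Real.sin_pos_of_pos_of_lt_pi ha0 haπ
  have hsb : 0 < Real.sin b := Real.sin_pos_of_pos_of_lt_pi hb0 hbπ
  have hsin : Real.sin α = Real.sin a * Real.cos b + Real.cos a * Real.sin b := by
    rw [← hab, Real.sin_add]
  have hcos : Real.cos α = Real.cos a * Real.cos b - Real.sin a * Real.sin b := by
    rw [← hab, Real.cos_add]
  have h00 : ⟪μ₀, μ₀⟫ = (1 : ℝ) := by
    rw [real_inner_self_eq_norm_sq, h₀]; norm_num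
  have h11 : ⟪μ₁, μ₁⟫ = (1 : ℝ) := by
    rw [real_inner_self_eq_norm_sq, h₁]; norm_num
  have h10 : ⟪μ₁, μ₀⟫ = Real.cos α := by rw [real_inner_comm, hc]
  set μ := slerp μ₀ μ₁ t₀ with hμdef
  have hμ : μ = (Real.sin b / Real.sin α) • μ₀ + (Real.sin a / Real.sin α) • μ₁ := by
    rw [hμdef, slerp]
  have hs' : 0 < Real.sin a * Real.cos b + Real.cos a * Real.sin b := hsin ▸ hs
  clear_value μ
  clear_value α
  clear_value a
  clear_value b
  have hinner0 : ⟪μ, μ₀⟫ = Real.cos a := by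
    rw [hμ, inner_add_left, real_inner_smul_left, real_inner_smul_left, h00, h10, hcos, hsin]
    have hne : Real.sin a * Real.cos b + Real.sin b * Real.cos a ≠ 0 := by linarith
    field_simp
    linear_combination (-1) * Real.sin b * Real.sin_sq_add_cos_sq a
  have hinner1 : ⟪μ, μ₁⟫ = Real.cos b := by
    rw [hμ, inner_add_left, real_inner_smul_left, real_inner_smul_left, h11, ← hc, hcos, hsin]
    have hne : Real.sin a * Real.cos b + Real.sin b * Real.cos a ≠ 0 := by linarith
    field_simp
    linear_combination (-1) * Real.sin a * Real.sin_sq_add_cos_sq b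
  have hμinner : ⟪μ, μ⟫ = (1 : ℝ) := by
    nth_rewrite 2 [hμ]
    rw [inner_add_right, real_inner_smul_right, real_inner_smul_right, hinner0, hinner1, hsin]
    have hne : Real.sin a * Real.cos b + Real.sin b * Real.cos a ≠ 0 := by linarith
    field_simp
    ring
  have hμ1 : ‖μ‖ = 1 := by
    have := real_inner_self_eq_norm_sq μ
    rw [hμinner] at this
    nlinarith [norm_nonneg μ]
  have harc0 : Real.arccos ⟪μ, μ₀⟫ = a := by rw [hinner0, Real.arccos_cos ha0.le haπ.le]
  have harc1 : Real.arccos ⟪μ, μ₁⟫ = b := by rw [hinner1, Real.arccos_cos hb0.le hbπ.le]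
  set v := Real.cos b • μ₀ - Real.cos a • μ₁ with hvdef
  clear_value v
  have hL0 : sphLog μ μ₀ = (a / Real.sin α) • v := by
    rw [sphLog, harc0, hvdef, hμ, hsin]
    have hne : Real.sin a * Real.cos b + Real.sin b * Real.cos a ≠ 0 := by linarith
    match_scalars <;> field_simp <;> ring
  have hL1 : sphLog μ μ₁ = -((b / Real.sin α) • v) := by
    rw [sphLog, harc1, hvdef, hμ, hsin]
    have hne : Real.cos b * Real.sin a + Real.sin b * Real.cos a ≠ 0 := by linarith
    match_scalars <;> field_simp <;> ring
  have h01 : ⟪μ₀, μ₁⟫ = Real.cos α := hc.symm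
  have hvv : ⟪v, v⟫ = Real.sin α ^ 2 := by
    simp only [hvdef, inner_sub_left, inner_sub_right, real_inner_smul_left,
      real_inner_smul_right, h00, h11, h01, h10]
    rw [hcos, hsin]
    linear_combination (-(Real.cos b ^ 2)) * Real.sin_sq_add_cos_sq a +
      (-(Real.cos a ^ 2)) * Real.sin_sq_add_cos_sq b
  have hv : ‖v‖ = Real.sin α := by
    have h2 : ‖v‖ ^ 2 = Real.sin α ^ 2 := by
      rw [← real_inner_self_eq_norm_sq, hvv]
    exact (sq_eq_sq₀ (norm_nonneg v) hs.le).mp h2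
  have hn0 : ‖sphLog μ μ₀‖ = a := by
    rw [hL0, norm_smul, hv, Real.norm_eq_abs, abs_of_pos (div_pos ha0 hs)]
    field_simp
  have hn1 : ‖sphLog μ μ₁‖ = b := by
    rw [hL1, norm_neg, norm_smul, hv, Real.norm_eq_abs, abs_of_pos (div_pos hb0 hs)]
    field_simp
  refine ⟨hn0, hn1, ?_⟩
  rw [hn0, hn1, hL0, hL1, smul_neg, neg_neg, smul_smul, smul_smul]
  congr 1
  rw [hadef, hbdef]
  field_simp
end
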